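/- Let Î(t) = ∏_{i=1}^n (1 - c_i exp(-t/τ_i))^{p_i} and Ĵ(t) = ∏_{i=1}^n (1 - d_i exp(-t/τ_i))^{p_i}, with τ_i > 0 pairwise distinct, p_i ≥ 1, and c_i, d_i real. If Î(t) = Ĵ(t) for all t ≥ 0, then c_i = d_i for all i. -/

import Mathlib

open Real Filter Topology Finset

lemma slope_log_aux (c : ℝ) :
    Filter.Tendsto (fun u : ℝ => Real.log (1 - c * u) / u) (nhdsWithin 0 {(0:ℝ)}ᶜ) (nhds (-c)) := by
  have h1 : HasDerivAt (fun u : ℝ => 1 - c * u) (-c) 0 := by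
    simpa using ((hasDerivAt_id (0:ℝ)).const_mul c).const_sub (1:ℝ)
  have h2 : HasDerivAt (fun u : ℝ => Real.log (1 - c * u)) (-c) 0 := by
    have := (Real.hasDerivAt_log (by norm_num : (1:ℝ) - c * 0 ≠ 0)).comp 0 h1
    simpa [Function.comp_def] using this
  have h3 := hasDerivAt_iff_tendsto_slope.mp h2
  rw [slope_fun_def_field] at h3
  simpa using h3

lemma exp_neg_div_tendsto {b : ℝ} (hb : 0 < b) :
    Filter.Tendsto (fun t : ℝ => Real.exp (-t / b)) atTop (nhdsWithin 0 {(0:ℝ)}ᶜ) := by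
  apply tendsto_nhdsWithin_of_tendsto_nhds_of_eventually_within
  · have h : Filter.Tendsto (fun t : ℝ => -t / b) atTop atBot := by
      have := (tendsto_id : Filter.Tendsto (id : ℝ → ℝ) atTop atTop).atTop_div_const hb
      have h2 := tendsto_neg_atTop_atBot.comp this
      refine h2.congr fun t => ?_
      simp [neg_div]
    exact Real.tendsto_exp_atBot.comp h
  · exact Filter.Eventually.of_forall fun t => (Real.exp_pos _).ne'

lemma L1 {b : ℝ} (hb : 0 < b) (c : ℝ) :
    Filter.Tendsto (fun t : ℝ => Real.exp (t / b) * Real.log (1 - c * Real.exp (-t / b)))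
      atTop (nhds (-c)) := by
  have h := (slope_log_aux c).comp (exp_neg_div_tendsto hb)
  refine h.congr fun t => ?_
  have he : Real.exp (-t / b) = (Real.exp (t / b))⁻¹ := by
    rw [neg_div, Real.exp_neg]
  simp only [Function.comp_apply, he]
  rw [div_eq_mul_inv, inv_inv, mul_comm]

lemma L0 {a b : ℝ} (hb : 0 < b) (hab : b < a) (c : ℝ) :
    Filter.Tendsto (fun t : ℝ => Real.exp (t / a) * Real.log (1 - c * Real.exp (-t / b)))
      atTop (nhds 0) := by
  have ha : 0 < a := hb.trans hab
  have hcoef : 1 / a - 1 / b < 0 := sub_neg.mpr (one_div_lt_one_div_of_lt hb hab)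
  have h1 : Filter.Tendsto (fun t : ℝ => Real.exp (t / a - t / b)) atTop (nhds 0) := by
    apply Real.tendsto_exp_atBot.comp
    have := (tendsto_id : Filter.Tendsto (id : ℝ → ℝ) atTop atTop).atTop_mul_const_of_neg hcoef
    refine this.congr fun t => ?_
    simp only [id_eq]
    ring
  have h2 := h1.mul (L1 hb c)
  rw [zero_mul] at h2
  refine h2.congr fun t => ?_
  rw [← mul_assoc, ← Real.exp_add, sub_add_cancel]

lemma key (n : ℕ) (c d τ : Fin n → ℝ) (hτ : ∀ i, 0 < τ i)
    (hdist : ∀ i j, i ≠ j → τ i ≠ τ j) (p : Fin n → ℕ) (hp : ∀ i, 1 ≤ p i) :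
    ∀ S : Finset (Fin n),
      (∀ᶠ t in atTop, ∑ i ∈ S, (p i : ℝ) *
        (Real.log (1 - c i * Real.exp (-t / τ i))
          - Real.log (1 - d i * Real.exp (-t / τ i))) = 0) →
      ∀ i ∈ S, c i = d i := by
  intro S
  induction S using Finset.strongInduction with
  | _ S ih =>
    intro heq i hi
    obtain ⟨m, hmS, hmax⟩ := S.exists_max_image τ ⟨i, hi⟩
    have hcm : c m = d m := by
      have hlim : Filter.Tendsto (fun t : ℝ => Real.exp (t / τ m) * ∑ j ∈ S, (p j : ℝ) *
          (Real.log (1 - c j * Real.exp (-t / τ j))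
            - Real.log (1 - d j * Real.exp (-t / τ j)))) atTop
          (nhds ((p m : ℝ) * (d m - c m))) := by
        have hs : Filter.Tendsto (fun t : ℝ => ∑ j ∈ S, (p j : ℝ) *
            (Real.exp (t / τ m) * Real.log (1 - c j * Real.exp (-t / τ j))
              - Real.exp (t / τ m) * Real.log (1 - d j * Real.exp (-t / τ j)))) atTop
            (nhds (∑ j ∈ S, if j = m then (p m : ℝ) * (d m - c m) else 0)) := by
          apply tendsto_finset_sum
          intro j hj
          by_cases hjm : j = m
          · subst hjm
            simp only [if_pos rfl]
            have := ((L1 (hτ j) (c j)).sub (L1 (hτ j) (d j))).const_mul ((p j : ℝ))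
            convert this using 2
            · simp only [if_true]
              ring
          · simp only [if_neg hjm]
            have hlt : τ j < τ m := lt_of_le_of_ne (hmax j hj) (hdist j m hjm)
            have := ((L0 (hτ j) hlt (c j)).sub (L0 (hτ j) hlt (d j))).const_mul ((p j : ℝ))
            simpa using this
        rw [Finset.sum_ite_eq' S m, if_pos hmS] at hs
        refine hs.congr fun t => ?_
        rw [Finset.mul_sum]
        apply Finset.sum_congr rfl
        intro j _
        ring
      have hzero : Filter.Tendsto (fun t : ℝ => Real.exp (t / τ m) * ∑ j ∈ S, (p j : ℝ) *
          (Real.log (1 - c j * Real.exp (-t / τ j))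
            - Real.log (1 - d j * Real.exp (-t / τ j)))) atTop (nhds 0) := by
        refine Filter.Tendsto.congr' ?_ tendsto_const_nhds
        filter_upwards [heq] with t ht
        rw [ht, mul_zero]
      have h0 := tendsto_nhds_unique hlim hzero
      have hpm : (0 : ℝ) < (p m : ℝ) := by
        exact_mod_cast Nat.lt_of_lt_of_le Nat.zero_lt_one (hp m)
      nlinarith [h0]
    by_cases him : i = m
    · rwa [him]
    · refine ih (S.erase m) (Finset.erase_ssubset hmS) ?_ i (Finset.mem_erase.mpr ⟨him, hi⟩)
      filter_upwards [heq] with t ht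
      rw [Finset.sum_erase_eq_sub hmS, ht, hcm]
      simp

theorem normalized_trace_identifiability (n : ℕ) (c d : Fin n → ℝ)
    (τ : Fin n → ℝ) (hτ : ∀ i, 0 < τ i)
    (hdist : ∀ i j, i ≠ j → τ i ≠ τ j) (p : Fin n → ℕ) (hp : ∀ i, 1 ≤ p i)
    (heq : ∀ t : ℝ, 0 ≤ t →
      ∏ i, (1 - c i * Real.exp (-t / τ i)) ^ (p i) =
      ∏ i, (1 - d i * Real.exp (-t / τ i)) ^ (p i)) :
    ∀ i, c i = d i := by
  have hev : ∀ᶠ t in atTop, ∑ i ∈ (Finset.univ : Finset (Fin n)), (p i : ℝ) *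
      (Real.log (1 - c i * Real.exp (-t / τ i))
        - Real.log (1 - d i * Real.exp (-t / τ i))) = 0 := by
    have hpos : ∀ᶠ t in atTop, ∀ i : Fin n,
        0 < 1 - c i * Real.exp (-t / τ i) ∧ 0 < 1 - d i * Real.exp (-t / τ i) := by
      refine Filter.eventually_all.2 fun i => ?_
      have hc : Filter.Tendsto (fun t : ℝ => c i * Real.exp (-t / τ i)) atTop (nhds 0) := by
        have := ((exp_neg_div_tendsto (hτ i)).mono_right nhdsWithin_le_nhds).const_mul (c i)
        simpa using this
      have hd : Filter.Tendsto (fun t : ℝ => d i * Real.exp (-t / τ i)) atTop (nhds 0) := by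
        have := ((exp_neg_div_tendsto (hτ i)).mono_right nhdsWithin_le_nhds).const_mul (d i)
        simpa using this
      filter_upwards [hc.eventually_lt_const zero_lt_one, hd.eventually_lt_const zero_lt_one]
        with t h1 h2
      constructor <;> linarith
    filter_upwards [hpos, eventually_ge_atTop (0:ℝ)] with t hpos ht
    have hprod := heq t ht
    have hlog : Real.log (∏ i, (1 - c i * Real.exp (-t / τ i)) ^ (p i))
        = Real.log (∏ i, (1 - d i * Real.exp (-t / τ i)) ^ (p i)) := by rw [hprod]
    rw [Real.log_prod (fun i _ => pow_ne_zero _ (hpos i).1.ne'),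
        Real.log_prod (fun i _ => pow_ne_zero _ (hpos i).2.ne')] at hlog
    simp only [Real.log_pow] at hlog
    simp only [mul_sub, Finset.sum_sub_distrib]
    rw [hlog, sub_self]
  intro i
  exact key n c d τ hτ hdist p hp Finset.univ hev i (Finset.mem_univ i)
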